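/- The Cantor set 𝒞 = {0,1}^ℕ admits a compensation function, i.e. there exists a weak*-to-weak*-continuous map ξ : M(𝒞) → M(𝒞) such that ξ(μ) is a compensation of μ for every μ ∈ M(𝒞). -/

import Mathlib

open MeasureTheory

noncomputable section

variable {K : Type*} [TopologicalSpace K] [MeasurableSpace K]

/-- The integral of a function against a signed measure. -/
def sInt (μ : SignedMeasure K) (f : K → ℝ) : ℝ :=
  ∫ x, f x ∂μ.toJordanDecomposition.posPart - ∫ x, f x ∂μ.toJordanDecomposition.negPart

/-- The total variation norm of a signed measure. -/
def mNorm (μ : SignedMeasure K) : ℝ := (μ.totalVariation Set.univ).toReal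

/-- `ν` is a compensation of `μ`: if `μ(K) > 0` then `0 ≤ ν ≤ μ⁺` and `ν(K) = μ(K)`;
if `μ(K) ≤ 0` then `ν = 0`. -/
def IsCompensation (μ ν : SignedMeasure K) : Prop :=
  if 0 < μ Set.univ then
    0 ≤ ν ∧ ν ≤ μ.toJordanDecomposition.posPart.toSignedMeasure ∧ ν Set.univ = μ Set.univ
  else ν = 0

/-- A family of signed measures indexed by a topological space is weak*-continuous. -/
def WStarContinuousFamily {T : Type*} [TopologicalSpace T] (F : T → SignedMeasure K) : Prop :=
  ∀ g : C(K, ℝ), Continuous fun t => sInt (F t) g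

/-- Membership in `W(K)`: a weak*-continuous map from `K` into the closed unit ball of the
space `M(K)` of regular Borel signed measures. -/
def MemW (F : K → SignedMeasure K) : Prop :=
  WStarContinuousFamily F ∧ ∀ t, (F t).totalVariation.Regular ∧ mNorm (F t) ≤ 1

/-- `K` admits local compensation: every element of `W(K)` admits a compensation in `W(K)`. -/
def AdmitsLocalCompensation (K : Type*) [TopologicalSpace K] [MeasurableSpace K] : Prop :=
  ∀ F : K → SignedMeasure K, MemW F →
    ∃ G : K → SignedMeasure K, MemW G ∧ ∀ t, IsCompensation (F t) (G t)

/-- The weak* topology on signed measures. -/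
instance wstarTopology : TopologicalSpace (SignedMeasure K) :=
  TopologicalSpace.induced (fun μ (g : C(K, ℝ)) => sInt μ g) inferInstance

/-- `M(K)`: the regular Borel signed measures on `K`, with the weak* topology. -/
def MK (K : Type*) [TopologicalSpace K] [MeasurableSpace K] : Type _ :=
  {μ : SignedMeasure K // μ.totalVariation.Regular}

instance : TopologicalSpace (MK K) := instTopologicalSpaceSubtype

/-- The closed unit ball `B_{M(K)}` of `M(K)`, with the weak* topology. -/
def BMK (K : Type*) [TopologicalSpace K] [MeasurableSpace K] : Type _ :=
  {μ : SignedMeasure K // μ.totalVariation.Regular ∧ mNorm μ ≤ 1}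

instance : TopologicalSpace (BMK K) := instTopologicalSpaceSubtype

/-- A compensation function on `K`: a weak*-to-weak*-continuous map `ξ : M(K) → M(K)` such
that `ξ μ` is a compensation of `μ` for every `μ ∈ M(K)`. -/
def IsCompensationFunction (ξ : MK K → MK K) : Prop :=
  Continuous ξ ∧ ∀ μ : MK K, IsCompensation μ.1 (ξ μ).1

/-- A `B_{M(K)}`-compensation function on `K`. -/
def IsBallCompensationFunction (ξ : BMK K → MK K) : Prop :=
  Continuous ξ ∧ ∀ μ : BMK K, IsCompensation μ.1 (ξ μ).1

/-- The numerical radius of an operator on a real Banach space. -/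
def NumericalRadius {X : Type*} [NormedAddCommGroup X] [NormedSpace ℝ X] (T : X →L[ℝ] X) : ℝ :=
  sSup {r | ∃ (x : X) (φ : X →L[ℝ] ℝ), ‖x‖ = 1 ∧ ‖φ‖ = 1 ∧ φ x = 1 ∧ r = |φ (T x)|}

/-- The Bishop-Phelps-Bollobás property for numerical radius, witnessed by a
given function `δ`. -/
def HasBPBNumericalRadiusWith (X : Type*) [NormedAddCommGroup X] [NormedSpace ℝ X]
    (δ : ℝ → ℝ) : Prop :=
  ∀ ε : ℝ, 0 < ε → ε < 1 →
    ∀ T : X →L[ℝ] X, NumericalRadius T = 1 →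
      ∀ (x : X) (φ : X →L[ℝ] ℝ), ‖x‖ = 1 → ‖φ‖ = 1 → φ x = 1 →
        1 - δ ε ≤ φ (T x) →
        ∃ (T₀ : X →L[ℝ] X) (x₀ : X) (φ₀ : X →L[ℝ] ℝ),
          NumericalRadius T₀ = 1 ∧ ‖x₀‖ = 1 ∧ ‖φ₀‖ = 1 ∧ φ₀ x₀ = 1 ∧
          φ₀ (T₀ x₀) = 1 ∧ NumericalRadius (T - T₀) ≤ ε ∧ ‖x - x₀‖ ≤ ε ∧ ‖φ - φ₀‖ ≤ ε

/-- The Bishop-Phelps-Bollobás property for numerical radius. -/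
def HasBPBNumericalRadius (X : Type*) [NormedAddCommGroup X] [NormedSpace ℝ X] : Prop :=
  ∃ δ : ℝ → ℝ, (∀ ε : ℝ, 0 < ε → ε < 1 → 0 < δ ε ∧ δ ε < 1) ∧ HasBPBNumericalRadiusWith X δ

/-- A closeness function for `K`: a continuous function `c` on
`{(x,y,z) ∈ K³ : y ≠ z}` with values in `[-1,1]` such that `c(x,y,z) = -c(x,z,y)`
whenever `y ≠ z` and `c(x,x,z) = 1` whenever `x ≠ z`. -/
def IsClosenessFunction (K : Type*) [TopologicalSpace K]
    (c : {p : K × K × K // p.2.1 ≠ p.2.2} → ℝ) : Prop :=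
  Continuous c ∧ (∀ p, c p ∈ Set.Icc (-1 : ℝ) 1) ∧
    (∀ (x y z : K) (h : y ≠ z), c ⟨(x, y, z), h⟩ = -c ⟨(x, z, y), h.symm⟩) ∧
    (∀ (x z : K) (h : x ≠ z), c ⟨(x, x, z), h⟩ = 1)

/-- The Cantor set `{0,1}^ℕ`. -/
def Cantor : Type := ℕ → Bool

instance : TopologicalSpace Cantor := inferInstanceAs (TopologicalSpace (ℕ → Bool))
instance : CompactSpace Cantor := inferInstanceAs (CompactSpace (ℕ → Bool))
instance : T2Space Cantor := inferInstanceAs (T2Space (ℕ → Bool))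
instance : MeasurableSpace Cantor := borel Cantor
instance : BorelSpace Cantor := ⟨rfl⟩

namespace Stmt10Aux

instance : SecondCountableTopology Cantor :=
  inferInstanceAs (SecondCountableTopology (ℕ → Bool))
instance : TopologicalSpace.PseudoMetrizableSpace Cantor :=
  inferInstanceAs (TopologicalSpace.PseudoMetrizableSpace (ℕ → Bool))
instance : DiscreteTopology Bool := inferInstance

/-- Cylinder: the list records constraints, newest (highest) coordinate first. -/
def cyl : List Bool → Set Cantor
  | [] => Set.univ
  | b :: w => cyl w ∩ {y : ℕ → Bool | y w.length = b}

lemma isClopen_cyl (w : List Bool) : IsClopen (cyl w) := by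
  induction w with
  | nil => exact isClopen_univ
  | cons b w ih =>
    exact ih.inter ((isClopen_discrete {b}).preimage (continuous_apply (A := fun _ : ℕ => Bool) w.length))

lemma measurableSet_cyl (w : List Bool) : MeasurableSet (cyl w) :=
  (isClopen_cyl w).isOpen.measurableSet

lemma cyl_eq_union (w : List Bool) : cyl w = cyl (false :: w) ∪ cyl (true :: w) := by
  ext y
  simp only [cyl, Set.mem_inter_iff, Set.mem_setOf_eq, Set.mem_union]
  constructor
  · intro hy
    by_cases h : y w.length = false
    · exact Or.inl ⟨hy, h⟩
    · exact Or.inr ⟨hy, by show y w.length = true; simpa using h⟩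
  · rintro (⟨hy, -⟩ | ⟨hy, -⟩) <;> exact hy

lemma disjoint_cyl_cons (w : List Bool) : Disjoint (cyl (false :: w)) (cyl (true :: w)) := by
  rw [Set.disjoint_iff_inter_eq_empty]
  ext y
  simp only [cyl, Set.mem_inter_iff, Set.mem_setOf_eq, Set.mem_empty_iff_false, iff_false]
  rintro ⟨⟨-, h1⟩, -, h2⟩
  have h1' : y w.length = false := h1
  have h2' : y w.length = true := h2
  rw [h1'] at h2'
  exact Bool.false_ne_true h2'

lemma disjoint_cyl (w w' : List Bool) (hl : w.length = w'.length) (hne : w ≠ w') :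
    Disjoint (cyl w) (cyl w') := by
  induction w generalizing w' with
  | nil => cases w' with
    | nil => exact absurd rfl hne
    | cons b w' => simp at hl
  | cons b w ih =>
    cases w' with
    | nil => simp at hl
    | cons b' w' =>
      simp only [List.length_cons, Nat.succ.injEq] at hl
      by_cases hw : w = w'
      · subst hw
        have hb : b ≠ b' := by intro h; exact hne (by rw [h])
        rw [Set.disjoint_iff_inter_eq_empty]
        ext y
        simp only [cyl, Set.mem_inter_iff, Set.mem_setOf_eq, Set.mem_empty_iff_false]
        simp only [cyl, Set.mem_inter_iff, Set.mem_setOf_eq, Set.mem_empty_iff_false, iff_false]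
        rintro ⟨⟨-, h1⟩, -, h2⟩
        have h1' : y w.length = b := h1
        have h2' : y w.length = b' := h2
        rw [h1'] at h2'
        exact hb h2'
      · exact Set.disjoint_of_subset Set.inter_subset_left Set.inter_subset_left
          (ih w' hl hw)

/-- Level-n words (lists of length n). -/
def levelF : ℕ → Finset (List Bool)
  | 0 => {[]}
  | n + 1 => (levelF n).biUnion fun w => {false :: w, true :: w}

lemma mem_levelF {n : ℕ} {w : List Bool} : w ∈ levelF n ↔ w.length = n := by
  induction n generalizing w with
  | zero => cases w <;> simp [levelF]
  | succ n ih =>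
    cases w with
    | nil => simp [levelF]
    | cons b w =>
      simp only [levelF, Finset.mem_biUnion, Finset.mem_insert, Finset.mem_singleton,
        List.length_cons, Nat.succ.injEq]
      constructor
      · rintro ⟨v, hv, (h | h)⟩ <;> · cases h; exact ih.1 hv
      · intro h
        exact ⟨w, ih.2 h, by cases b <;> simp⟩

lemma iUnion_cyl_levelF (n : ℕ) : ⋃ w ∈ levelF n, cyl w = Set.univ := by
  induction n with
  | zero => simp [levelF, cyl]
  | succ n ih =>
    rw [← ih]
    ext y
    simp only [Set.mem_iUnion, exists_prop]
    constructor
    · rintro ⟨w, hw, hy⟩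
      cases w with
      | nil => simp [levelF] at hw
      | cons b w =>
        refine ⟨w, mem_levelF.2 ?_, (Set.inter_subset_left : cyl (b :: w) ⊆ cyl w) hy⟩
        have := mem_levelF.1 hw; simpa using this
    · rintro ⟨w, hw, hy⟩
      refine ⟨y w.length :: w, mem_levelF.2 (by simp [mem_levelF.1 hw]), ?_⟩
      exact ⟨hy, rfl⟩

/-- The word of `x` of length `n` (newest coordinate first). -/
def cword (x : Cantor) : ℕ → List Bool
  | 0 => []
  | n + 1 => x n :: cword x n

lemma cword_length (x : Cantor) (n : ℕ) : (cword x n).length = n := by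
  induction n with
  | zero => rfl
  | succ n ih => simp [cword, ih]

lemma mem_cyl_cword (x : Cantor) (n : ℕ) : x ∈ cyl (cword x n) := by
  induction n with
  | zero => trivial
  | succ n ih => exact ⟨ih, by simp [cword_length]; rfl⟩

lemma cyl_cword_subset {x : Cantor} {n : ℕ} {y : Cantor} (hy : y ∈ cyl (cword x n)) :
    ∀ i < n, y i = x i := by
  induction n with
  | zero => intro i hi; omega
  | succ n ih =>
    intro i hi
    rcases hy with ⟨hy1, hy2⟩
    rcases Nat.lt_succ_iff_lt_or_eq.1 hi with h | rfl
    · exact ih hy1 i h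
    · have h2 : y (cword x i).length = x i := hy2
      rw [cword_length] at h2
      exact h2

/-- Every open set containing x contains a cylinder around x. -/
lemma exists_cyl_subset {U : Set Cantor} (hU : IsOpen U) {x : Cantor} (hx : x ∈ U) :
    ∃ n, cyl (cword x n) ⊆ U := by
  obtain ⟨I, u, hu, hsub⟩ := isOpen_pi_iff.1 hU x hx
  rcases I.eq_empty_or_nonempty with rfl | hne
  · exact ⟨0, by intro y _; apply hsub; simp; trivial⟩
  refine ⟨(I.max' hne) + 1, fun y hy => hsub ?_⟩
  intro i hi
  have hiI : i < I.max' hne + 1 := Nat.lt_succ_of_le (I.le_max' i hi)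
  rw [cyl_cword_subset hy i hiI]
  exact (hu i hi).2



/-! ### The cascade allocation -/

/-- Signed mass of a cylinder. -/
def sfn (μ : SignedMeasure Cantor) (w : List Bool) : ℝ :=
  (μ.toJordanDecomposition.posPart (cyl w)).toReal
    - (μ.toJordanDecomposition.negPart (cyl w)).toReal

/-- Positive part of the signed mass. -/
def spn (μ : SignedMeasure Cantor) (w : List Bool) : ℝ := max (sfn μ w) 0

/-- The proportional cascade allocation. -/
def tfn (μ : SignedMeasure Cantor) : List Bool → ℝ
  | [] => max (sfn μ []) 0
  | b :: w => tfn μ w * spn μ (b :: w) / (spn μ (false :: w) + spn μ (true :: w))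

/-- Left endpoints of the allocation intervals. -/
def afn (μ : SignedMeasure Cantor) : List Bool → ℝ
  | [] => 0
  | b :: w => afn μ w + if b then tfn μ (false :: w) else 0

variable {μ : SignedMeasure Cantor}

lemma spn_nonneg (w : List Bool) : 0 ≤ spn μ w := le_max_right _ _

lemma sfn_le_pos (w : List Bool) :
    sfn μ w ≤ (μ.toJordanDecomposition.posPart (cyl w)).toReal := by
  have : (0:ℝ) ≤ (μ.toJordanDecomposition.negPart (cyl w)).toReal := ENNReal.toReal_nonneg
  simp only [sfn]; linarith

lemma spn_le_pos (w : List Bool) :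
    spn μ w ≤ (μ.toJordanDecomposition.posPart (cyl w)).toReal :=
  max_le (sfn_le_pos w) ENNReal.toReal_nonneg

lemma sfn_add (w : List Bool) : sfn μ w = sfn μ (false :: w) + sfn μ (true :: w) := by
  have hp : μ.toJordanDecomposition.posPart (cyl w)
      = μ.toJordanDecomposition.posPart (cyl (false :: w))
        + μ.toJordanDecomposition.posPart (cyl (true :: w)) := by
    rw [cyl_eq_union w]
    exact measure_union (disjoint_cyl_cons w) (measurableSet_cyl _)
  have hn : μ.toJordanDecomposition.negPart (cyl w)
      = μ.toJordanDecomposition.negPart (cyl (false :: w))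
        + μ.toJordanDecomposition.negPart (cyl (true :: w)) := by
    rw [cyl_eq_union w]
    exact measure_union (disjoint_cyl_cons w) (measurableSet_cyl _)
  simp only [sfn, hp, hn, ENNReal.toReal_add (measure_ne_top _ _) (measure_ne_top _ _)]
  ring

lemma spn_le_add (w : List Bool) : spn μ w ≤ spn μ (false :: w) + spn μ (true :: w) := by
  rcases le_total (sfn μ w) 0 with h | h
  · rw [spn, max_eq_right h]
    exact add_nonneg (spn_nonneg _) (spn_nonneg _)
  · rw [spn, max_eq_left h, sfn_add w]
    exact add_le_add (le_max_left _ _) (le_max_left _ _)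

lemma tfn_nonneg (w : List Bool) : 0 ≤ tfn μ w := by
  induction w with
  | nil => exact le_max_right _ _
  | cons b w ih =>
    exact div_nonneg (mul_nonneg ih (spn_nonneg _))
      (add_nonneg (spn_nonneg _) (spn_nonneg _))

lemma tfn_le_spn (w : List Bool) : tfn μ w ≤ spn μ w := by
  induction w with
  | nil => exact le_rfl
  | cons b w ih =>
    show tfn μ w * spn μ (b :: w) / (spn μ (false :: w) + spn μ (true :: w)) ≤ _
    set D := spn μ (false :: w) + spn μ (true :: w) with hD
    rcases eq_or_lt_of_le (add_nonneg (spn_nonneg (μ := μ) (false :: w))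
      (spn_nonneg (μ := μ) (true :: w))) with h0 | h0
    · rw [← hD] at h0
      rw [← h0, div_zero]
      exact spn_nonneg _
    · rw [← hD] at h0
      rw [div_le_iff₀ h0]
      have h1 : tfn μ w ≤ D := le_trans ih (spn_le_add w)
      calc tfn μ w * spn μ (b :: w) ≤ D * spn μ (b :: w) :=
            mul_le_mul_of_nonneg_right h1 (spn_nonneg _)
        _ = spn μ (b :: w) * D := mul_comm _ _

lemma tfn_children (w : List Bool) :
    tfn μ (false :: w) + tfn μ (true :: w) = tfn μ w := by
  set D := spn μ (false :: w) + spn μ (true :: w) with hD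
  rcases eq_or_lt_of_le (add_nonneg (spn_nonneg (μ := μ) (false :: w))
    (spn_nonneg (μ := μ) (true :: w))) with h0 | h0
  · have ht : tfn μ w = 0 := le_antisymm
      (by
        have h1 := tfn_le_spn (μ := μ) w
        have h2 := spn_le_add (μ := μ) w
        have h3 : spn μ (false :: w) + spn μ (true :: w) = 0 := h0.symm
        linarith) (tfn_nonneg w)
    show tfn μ w * spn μ (false :: w) / D + tfn μ w * spn μ (true :: w) / D = tfn μ w
    rw [ht]; simp
  · rw [← hD] at h0
    show tfn μ w * spn μ (false :: w) / D + tfn μ w * spn μ (true :: w) / D = tfn μ w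
    field_simp
    ring

/-! ### The quantile map and the compensating measure -/

/-- Allocation interval of a word. -/
def Iset (μ : SignedMeasure Cantor) (w : List Bool) : Set ℝ :=
  Set.Ico (afn μ w) (afn μ w + tfn μ w)

lemma afn_false (w : List Bool) : afn μ (false :: w) = afn μ w := by
  simp [afn]

lemma afn_true (w : List Bool) : afn μ (true :: w) = afn μ w + tfn μ (false :: w) := by
  simp [afn]

lemma Iset_subset (b : Bool) (w : List Bool) : Iset μ (b :: w) ⊆ Iset μ w := by
  have h1 := tfn_nonneg (μ := μ) (false :: w)
  have h2 := tfn_nonneg (μ := μ) (true :: w)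
  have h3 := tfn_children (μ := μ) w
  cases b
  · rw [Iset, Iset, afn_false]
    exact Set.Ico_subset_Ico le_rfl (by linarith)
  · rw [Iset, Iset, afn_true]
    exact Set.Ico_subset_Ico (by linarith) (by linarith)

lemma Iset_subset_root (w : List Bool) : Iset μ w ⊆ Set.Ico 0 (tfn μ []) := by
  induction w with
  | nil => rw [Iset]; show Set.Ico (0:ℝ) (0 + tfn μ []) ⊆ _; rw [zero_add]
  | cons b w ih => exact (Iset_subset b w).trans ih

/-- The word of `x ∈ [0, m)` selected by the cascade. -/
def wrd (μ : SignedMeasure Cantor) (x : ℝ) : ℕ → List Bool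
  | 0 => []
  | n + 1 => (if afn μ (true :: wrd μ x n) ≤ x then true else false) :: wrd μ x n

lemma wrd_length (x : ℝ) (n : ℕ) : (wrd μ x n).length = n := by
  induction n with
  | zero => rfl
  | succ n ih => simp [wrd, ih]

lemma mem_Iset_wrd {x : ℝ} (hx : x ∈ Set.Ico 0 (tfn μ [])) (n : ℕ) :
    x ∈ Iset μ (wrd μ x n) := by
  induction n with
  | zero =>
    show x ∈ Set.Ico (0:ℝ) (0 + tfn μ [])
    rwa [zero_add]
  | succ n ih =>
    set w := wrd μ x n with hw
    rcases ih with ⟨ihl, ihu⟩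
    have h3 := tfn_children (μ := μ) w
    show x ∈ Iset μ ((if afn μ (true :: w) ≤ x then true else false) :: w)
    by_cases h : afn μ (true :: w) ≤ x
    · rw [if_pos h, Iset, afn_true]
      constructor
      · rw [← afn_true]; exact h
      · rw [afn_true] at *
        have : afn μ w + tfn μ w = afn μ w + tfn μ (false :: w) + tfn μ (true :: w) := by
          linarith
        linarith [ihu, this]
    · rw [if_neg h, Iset, afn_false]
      refine ⟨ihl, ?_⟩
      rw [afn_true] at h
      linarith [not_le.1 h]

lemma wrd_eq_of_mem {x : ℝ} {w : List Bool} (hx : x ∈ Iset μ w) :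
    wrd μ x w.length = w := by
  induction w with
  | nil => rfl
  | cons b w ih =>
    have hxw : x ∈ Iset μ w := Iset_subset b w hx
    have hw : wrd μ x w.length = w := ih hxw
    show (if afn μ (true :: wrd μ x w.length) ≤ x then true else false) :: wrd μ x w.length
        = b :: w
    rw [hw]
    rcases hx with ⟨hl, hu⟩
    cases b
    · have h' : ¬ afn μ (true :: w) ≤ x := by
        rw [afn_true]
        rw [afn_false] at hl hu
        push_neg
        linarith
      rw [if_neg h']
    · rw [if_pos hl]

lemma measurableSet_wrd_eq (n : ℕ) (w : List Bool) :
    MeasurableSet {x : ℝ | wrd μ x n = w} := by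
  induction n generalizing w with
  | zero =>
    by_cases h : w = []
    · subst h
      have : {x : ℝ | wrd μ x 0 = []} = Set.univ := by
        ext x; simp only [Set.mem_setOf_eq, Set.mem_univ, iff_true]; rfl
      rw [this]; exact MeasurableSet.univ
    · have : {x : ℝ | wrd μ x 0 = w} = ∅ := by
        ext x
        simp only [Set.mem_setOf_eq, Set.mem_empty_iff_false, iff_false]
        intro hx
        have hx' : ([] : List Bool) = w := hx
        exact h hx'.symm
      rw [this]; exact MeasurableSet.empty
  | succ n ih =>
    cases w with
    | nil =>
      convert MeasurableSet.empty
      ext x; simp only [Set.mem_setOf_eq, Set.mem_empty_iff_false, iff_false]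
      intro hx
      exact List.cons_ne_nil _ _ hx
    | cons b w =>
      cases b
      · have : {x : ℝ | wrd μ x (n+1) = false :: w}
            = {x : ℝ | wrd μ x n = w} ∩ Set.Iio (afn μ (true :: w)) := by
          ext x
          simp only [Set.mem_setOf_eq, Set.mem_inter_iff, wrd, List.cons.injEq, Set.mem_Iio]
          constructor
          · rintro ⟨hb, hw⟩
            refine ⟨hw, ?_⟩
            rw [hw] at hb
            by_cases h : afn μ (true :: w) ≤ x
            · rw [if_pos h] at hb; exact absurd hb (by decide)
            · exact not_le.1 h
          · rintro ⟨hw, hb⟩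
            rw [hw]
            exact ⟨if_neg (not_le.2 hb), rfl⟩
        rw [this]
        exact (ih w).inter measurableSet_Iio
      · have : {x : ℝ | wrd μ x (n+1) = true :: w}
            = {x : ℝ | wrd μ x n = w} ∩ Set.Ici (afn μ (true :: w)) := by
          ext x
          simp only [Set.mem_setOf_eq, Set.mem_inter_iff, wrd, List.cons.injEq, Set.mem_Ici]
          constructor
          · rintro ⟨hb, hw⟩
            refine ⟨hw, ?_⟩
            rw [hw] at hb
            by_cases h : afn μ (true :: w) ≤ x
            · exact h
            · rw [if_neg h] at hb; exact absurd hb Bool.false_ne_true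
          · rintro ⟨hw, hb⟩
            rw [hw]
            exact ⟨if_pos hb, rfl⟩
        rw [this]
        exact (ih w).inter measurableSet_Ici

/-- The branch map from `[0, m)` to the Cantor set. -/
def Phi (μ : SignedMeasure Cantor) (x : ℝ) : Cantor := fun n => (wrd μ x (n + 1)).headI

lemma mem_cyl_wrd {x : ℝ} (n : ℕ) : Phi μ x ∈ cyl (wrd μ x n) := by
  induction n with
  | zero => trivial
  | succ n ih =>
    refine ⟨ih, ?_⟩
    show Phi μ x ((wrd μ x n).length) = _
    rw [wrd_length]
    rfl

lemma Phi_preimage_cyl (w : List Bool) :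
    Phi μ ⁻¹' (cyl w) = {x : ℝ | wrd μ x w.length = w} := by
  ext x
  simp only [Set.mem_preimage, Set.mem_setOf_eq]
  constructor
  · intro hc
    by_contra h
    exact (disjoint_cyl _ _ (by rw [wrd_length]) h).ne_of_mem (mem_cyl_wrd w.length) hc rfl
  · intro h
    rw [← h]
    exact mem_cyl_wrd w.length

lemma measurable_Phi : Measurable (Phi μ) := by
  show @Measurable ℝ Cantor _ (MeasurableSpace.generateFrom {s : Set Cantor | IsOpen s}) (Phi μ)
  refine measurable_generateFrom fun t ht => ?_
  have ht' : IsOpen t := ht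
  have : Phi μ ⁻¹' t = ⋃ w ∈ {w : List Bool | cyl w ⊆ t}, Phi μ ⁻¹' (cyl w) := by
    ext x
    simp only [Set.mem_preimage, Set.mem_iUnion, Set.mem_setOf_eq, exists_prop]
    constructor
    · intro hx
      obtain ⟨n, hn⟩ := exists_cyl_subset ht' hx
      exact ⟨cword (Phi μ x) n, hn, mem_cyl_cword _ n⟩
    · rintro ⟨w, hw, hx⟩
      exact hw hx
  rw [this]
  exact MeasurableSet.biUnion (Set.to_countable _)
    fun w _ => (Phi_preimage_cyl w) ▸ measurableSet_wrd_eq _ _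

/-- The key preimage identity. -/
lemma Phi_preimage (w : List Bool) :
    Phi μ ⁻¹' (cyl w) ∩ Set.Ico 0 (tfn μ []) = Iset μ w := by
  ext x
  simp only [Set.mem_inter_iff, Set.mem_preimage]
  constructor
  · rintro ⟨hc, hx⟩
    have h1 : Phi μ x ∈ cyl (wrd μ x w.length) := mem_cyl_wrd w.length
    by_cases h : wrd μ x w.length = w
    · rw [← h]; exact mem_Iset_wrd hx w.length
    · exact absurd (Set.not_disjoint_iff.2 ⟨Phi μ x, h1, hc⟩)
        (fun hd => hd (disjoint_cyl _ _ (by rw [wrd_length]) h))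
  · intro hx
    have hroot : x ∈ Set.Ico 0 (tfn μ []) := Iset_subset_root w hx
    refine ⟨?_, hroot⟩
    rw [← wrd_eq_of_mem hx]
    exact mem_cyl_wrd w.length

/-- The compensating measure. -/
def cm (μ : SignedMeasure Cantor) : Measure Cantor :=
  (volume.restrict (Set.Ico 0 (tfn μ []))).map (Phi μ)

lemma cm_cyl (w : List Bool) : cm μ (cyl w) = ENNReal.ofReal (tfn μ w) := by
  rw [cm, Measure.map_apply measurable_Phi (measurableSet_cyl w),
    Measure.restrict_apply (measurable_Phi (measurableSet_cyl w)), Phi_preimage,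
    Iset, Real.volume_Ico]
  congr 1
  ring

lemma cm_univ : cm μ Set.univ = ENNReal.ofReal (tfn μ []) := by
  have : (Set.univ : Set Cantor) = cyl [] := rfl
  rw [this, cm_cyl]

instance : IsFiniteMeasure (cm μ) :=
  ⟨by rw [cm_univ]; exact ENNReal.ofReal_lt_top⟩

/-! ### Domination by the positive part -/

lemma ofReal_tfn_le_pos (w : List Bool) :
    ENNReal.ofReal (tfn μ w) ≤ μ.toJordanDecomposition.posPart (cyl w) :=
  ENNReal.ofReal_le_of_le_toReal ((tfn_le_spn w).trans (spn_le_pos w))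

lemma cm_le_open {U : Set Cantor} (hU : IsOpen U) :
    cm μ U ≤ μ.toJordanDecomposition.posPart U := by
  classical
  set P := μ.toJordanDecomposition.posPart
  set Un : ℕ → Set Cantor := fun n =>
    ⋃ w ∈ (levelF n).filter (fun w => cyl w ⊆ U), cyl w with hUn
  have hUnsubU : ∀ n, Un n ⊆ U := by
    intro n
    refine Set.iUnion₂_subset fun w hw => ?_
    exact (Finset.mem_filter.1 hw).2
  have hmono : Monotone Un := by
    refine monotone_nat_of_le_succ fun n => ?_
    intro x hx
    simp only [hUn, Set.mem_iUnion, exists_prop, Finset.mem_filter] at hx ⊢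
    obtain ⟨w, ⟨hwl, hwU⟩, hxw⟩ := hx
    refine ⟨x w.length :: w, ⟨mem_levelF.2 (by simp [mem_levelF.1 hwl]), ?_⟩, ⟨hxw, rfl⟩⟩
    exact (Set.inter_subset_left).trans hwU
  have hunion : ⋃ n, Un n = U := by
    apply Set.Subset.antisymm
    · exact Set.iUnion_subset hUnsubU
    · intro x hx
      obtain ⟨n, hn⟩ := exists_cyl_subset hU hx
      refine Set.mem_iUnion.2 ⟨n, ?_⟩
      simp only [hUn, Set.mem_iUnion, exists_prop, Finset.mem_filter]
      exact ⟨cword x n, ⟨mem_levelF.2 (cword_length x n), hn⟩, mem_cyl_cword x n⟩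
  have hdisj : ∀ n, ∀ w ∈ (levelF n).filter (fun w => cyl w ⊆ U),
      ∀ w' ∈ (levelF n).filter (fun w => cyl w ⊆ U), w ≠ w' → Disjoint (cyl w) (cyl w') := by
    intro n w hw w' hw' hne
    exact disjoint_cyl w w' (by
      rw [mem_levelF.1 (Finset.mem_filter.1 hw).1, mem_levelF.1 (Finset.mem_filter.1 hw').1])
      hne
  have key : ∀ n, cm μ (Un n) ≤ P (Un n) := by
    intro n
    rw [hUn]
    rw [measure_biUnion_finset (hdisj n) (fun w _ => measurableSet_cyl w),
      measure_biUnion_finset (hdisj n) (fun w _ => measurableSet_cyl w)]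
    refine Finset.sum_le_sum fun w _ => ?_
    rw [cm_cyl]
    exact ofReal_tfn_le_pos w
  calc cm μ U = cm μ (⋃ n, Un n) := by rw [hunion]
    _ = ⨆ n, cm μ (Un n) := Directed.measure_iUnion hmono.directed_le
    _ ≤ ⨆ n, P (Un n) := iSup_mono key
    _ ≤ P U := iSup_le fun n => measure_mono (hUnsubU n)

lemma cm_le (hreg : μ.totalVariation.Regular) :
    cm μ ≤ μ.toJordanDecomposition.posPart := by
  set P := μ.toJordanDecomposition.posPart with hP
  haveI : IsFiniteMeasure μ.totalVariation := by
    rw [SignedMeasure.totalVariation]; infer_instance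
  haveI hOR : μ.totalVariation.OuterRegular := hreg.toOuterRegular
  have hPle : ∀ s : Set Cantor, P s ≤ μ.totalVariation s := by
    intro s
    rw [SignedMeasure.totalVariation, Measure.add_apply]
    exact le_self_add
  refine Measure.le_iff.2 fun E hE => ?_
  refine ENNReal.le_of_forall_pos_le_add fun ε hε hfin => ?_
  have hlt : μ.totalVariation E < μ.totalVariation E + ε := by
    refine ENNReal.lt_add_right (measure_ne_top _ _) ?_
    exact_mod_cast hε.ne'
  obtain ⟨U, hEU, hUopen, hU⟩ := Set.exists_isOpen_lt_of_lt E _ hlt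
  have h1 : cm μ E ≤ cm μ U := measure_mono hEU
  have h2 : cm μ U ≤ P U := cm_le_open hUopen
  have h3 : P U ≤ P E + P (U \ E) := by
    calc P U ≤ P (E ∪ U \ E) := measure_mono (by intro x hx; by_cases h : x ∈ E; exacts [Or.inl h, Or.inr ⟨hx, h⟩])
      _ ≤ P E + P (U \ E) := measure_union_le _ _
  have h4 : P (U \ E) ≤ μ.totalVariation (U \ E) := hPle _
  have h5 : μ.totalVariation (U \ E) ≤ ε := by
    rw [measure_diff hEU hE.nullMeasurableSet (measure_ne_top _ _)]
    exact tsub_le_iff_left.2 (by rw [add_comm] at hU ⊢; exact hU.le)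
  calc cm μ E ≤ P E + P (U \ E) := h1.trans (h2.trans h3)
    _ ≤ P E + ε := add_le_add le_rfl (h4.trans h5)

/-! ### Signed measure facts -/

/-- The Jordan decomposition of the signed measure of a finite measure. -/
def jdOf (ν : Measure Cantor) [IsFiniteMeasure ν] : JordanDecomposition Cantor where
  posPart := ν
  negPart := 0
  mutuallySingular := Measure.MutuallySingular.zero_right

lemma toJD_toSM (ν : Measure Cantor) [IsFiniteMeasure ν] :
    ν.toSignedMeasure.toJordanDecomposition = jdOf ν := by
  apply SignedMeasure.toJordanDecomposition_eq
  show ν.toSignedMeasure = (jdOf ν).toSignedMeasure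
  rw [JordanDecomposition.toSignedMeasure]
  show ν.toSignedMeasure = ν.toSignedMeasure - (0 : Measure Cantor).toSignedMeasure
  rw [Measure.toSignedMeasure_zero, sub_zero]

lemma totalVariation_toSM (ν : Measure Cantor) [IsFiniteMeasure ν] :
    ν.toSignedMeasure.totalVariation = ν := by
  rw [SignedMeasure.totalVariation, toJD_toSM]
  show ν + 0 = ν
  rw [add_zero]

lemma sInt_toSM (ν : Measure Cantor) [IsFiniteMeasure ν] (f : Cantor → ℝ) :
    sInt ν.toSignedMeasure f = ∫ y, f y ∂ν := by
  rw [sInt, toJD_toSM]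
  show (∫ y, f y ∂ν) - ∫ y, f y ∂(0 : Measure Cantor) = _
  rw [integral_zero_measure, sub_zero]

lemma apply_univ_eq_sfn (μ : SignedMeasure Cantor) : μ Set.univ = sfn μ [] := by
  conv_lhs => rw [← μ.toSignedMeasure_toJordanDecomposition]
  rw [JordanDecomposition.toSignedMeasure, VectorMeasure.sub_apply,
    Measure.toSignedMeasure_apply_measurable MeasurableSet.univ,
    Measure.toSignedMeasure_apply_measurable MeasurableSet.univ]
  rfl

/-- The indicator of a cylinder, as a continuous map. -/
def cylCM (w : List Bool) : C(Cantor, ℝ) :=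
  ⟨(cyl w).indicator 1,
    continuous_indicator (by simp [isClopen_cyl w]) continuous_const.continuousOn⟩

lemma sInt_cylCM (μ : SignedMeasure Cantor) (w : List Bool) :
    sInt μ (cylCM w) = sfn μ w := by
  rw [sInt, sfn]
  have : ∀ ρ : Measure Cantor, IsFiniteMeasure ρ →
      ∫ y, (cylCM w) y ∂ρ = (ρ (cyl w)).toReal := by
    intro ρ hρ
    have : ∫ y, (cyl w).indicator 1 y ∂ρ = ∫ y, (cyl w).indicator (fun _ => (1:ℝ)) y ∂ρ := rfl
    show ∫ y, (cyl w).indicator 1 y ∂ρ = _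
    rw [this, integral_indicator_const (1 : ℝ) (measurableSet_cyl w)]
    simp [Measure.real]
  rw [this _ inferInstance, this _ inferInstance]

lemma integral_toSM_eq (ν : Measure Cantor) [IsFiniteMeasure ν] (w : List Bool) :
    ν.toSignedMeasure (cyl w) = (ν (cyl w)).toReal :=
  Measure.toSignedMeasure_apply_measurable (measurableSet_cyl w)

/-! ### Continuity of the cascade on `MK Cantor` -/

lemma continuous_sInt_apply (g : C(Cantor, ℝ)) :
    Continuous fun μ : MK Cantor => sInt μ.1 g := by
  have h1 : Continuous fun μ : MK Cantor => (μ.1 : SignedMeasure Cantor) :=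
    continuous_subtype_val
  have h2 : Continuous fun μ : SignedMeasure Cantor => (fun g' : C(Cantor, ℝ) => sInt μ g') :=
    continuous_induced_dom
  exact (continuous_apply g).comp (h2.comp h1)

lemma continuous_sfn (w : List Bool) :
    Continuous fun μ : MK Cantor => sfn μ.1 w := by
  have := continuous_sInt_apply (cylCM w)
  simpa only [sInt_cylCM] using this

lemma continuous_spn (w : List Bool) :
    Continuous fun μ : MK Cantor => spn μ.1 w :=
  (continuous_sfn w).max continuous_const

/-- Continuity of `f * u / (u + v)` under domination `f ≤ u + v`. -/
lemma continuous_cascade_step {X : Type*} [TopologicalSpace X] {f u v : X → ℝ}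
    (hf : Continuous f) (hu : Continuous u) (hv : Continuous v)
    (hf0 : ∀ x, 0 ≤ f x) (hu0 : ∀ x, 0 ≤ u x) (hv0 : ∀ x, 0 ≤ v x)
    (hfuv : ∀ x, f x ≤ u x + v x) :
    Continuous fun x => f x * u x / (u x + v x) := by
  rw [continuous_iff_continuousAt]
  intro x
  by_cases hx : u x + v x = 0
  · have hb : ∀ y, 0 ≤ f y * u y / (u y + v y) ∧ f y * u y / (u y + v y) ≤ u y := by
      intro y
      constructor
      · exact div_nonneg (mul_nonneg (hf0 y) (hu0 y)) (add_nonneg (hu0 y) (hv0 y))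
      · rcases eq_or_lt_of_le (add_nonneg (hu0 y) (hv0 y)) with h0 | h0
        · rw [← h0, div_zero]; exact hu0 y
        · rw [div_le_iff₀ h0]
          calc f y * u y ≤ (u y + v y) * u y :=
                mul_le_mul_of_nonneg_right (hfuv y) (hu0 y)
            _ = u y * (u y + v y) := mul_comm _ _
    have hux : u x = 0 := le_antisymm (by nlinarith [hu0 x, hv0 x]) (hu0 x)
    have hval : f x * u x / (u x + v x) = 0 := by rw [hx, div_zero]
    rw [ContinuousAt, hval]
    have h1 : Filter.Tendsto u (nhds x) (nhds 0) := by
      have := hu.continuousAt (x := x)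
      rwa [ContinuousAt, hux] at this
    exact squeeze_zero (fun y => (hb y).1) (fun y => (hb y).2) h1
  · exact (((hf.mul hu).continuousAt).div ((hu.add hv).continuousAt) hx)

lemma continuous_tfn (w : List Bool) :
    Continuous fun μ : MK Cantor => tfn μ.1 w := by
  induction w with
  | nil => exact (continuous_sfn []).max continuous_const
  | cons b w ih =>
    have key := continuous_cascade_step (X := MK Cantor)
      (f := fun μ => tfn μ.1 w)
      (u := fun μ => spn μ.1 (b :: w))
      (v := fun μ => spn μ.1 ((!b) :: w))
      ih (continuous_spn _) (continuous_spn _)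
      (fun μ => tfn_nonneg w) (fun μ => spn_nonneg _) (fun μ => spn_nonneg _)
      (fun μ => ?_)
    · cases b
      · show Continuous fun μ : MK Cantor =>
          tfn μ.1 w * spn μ.1 (false :: w) / (spn μ.1 (false :: w) + spn μ.1 (true :: w))
        simpa using key
      · show Continuous fun μ : MK Cantor =>
          tfn μ.1 w * spn μ.1 (true :: w) / (spn μ.1 (false :: w) + spn μ.1 (true :: w))
        have : ∀ μ : MK Cantor, spn μ.1 (false :: w) + spn μ.1 (true :: w)
            = spn μ.1 (true :: w) + spn μ.1 (false :: w) := fun μ => add_comm _ _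
        simp only [this]
        simpa using key
    · have h1 := (tfn_le_spn (μ := μ.1) w).trans (spn_le_add (μ := μ.1) w)
      cases b
      · simpa using h1
      · simpa using add_comm (spn μ.1 (false :: w)) (spn μ.1 (true :: w)) ▸ h1

/-! ### Oscillation and cylinder points -/

lemma mem_cyl_congr {w : List Bool} {y y' : Cantor} (h : ∀ i < w.length, y' i = y i) :
    y ∈ cyl w → y' ∈ cyl w := by
  induction w with
  | nil => intro _; trivial
  | cons b w ih =>
    rintro ⟨h1, h2⟩
    refine ⟨ih (fun i hi => h i (by simp; omega)) h1, ?_⟩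
    have h2' : y w.length = b := h2
    show y' w.length = b
    rw [h w.length (by simp), h2']

lemma cyl_nonempty (w : List Bool) : ∃ y : Cantor, y ∈ cyl w := by
  induction w with
  | nil => exact ⟨fun _ => false, trivial⟩
  | cons b w ih =>
    obtain ⟨y, hy⟩ := ih
    refine ⟨Function.update y w.length b, ?_, ?_⟩
    · refine mem_cyl_congr (fun i hi => ?_) hy
      exact Function.update_of_ne (by omega) _ _
    · show Function.update y w.length b w.length = b
      exact Function.update_self _ _ _

/-- A chosen point of each cylinder. -/
def pt (w : List Bool) : Cantor := (cyl_nonempty w).choose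

lemma pt_mem (w : List Bool) : pt w ∈ cyl w := (cyl_nonempty w).choose_spec

lemma mem_cyl_iff_cword {y : Cantor} {w : List Bool} : y ∈ cyl w ↔ cword y w.length = w := by
  induction w with
  | nil => exact ⟨fun _ => rfl, fun _ => trivial⟩
  | cons b w ih =>
    constructor
    · rintro ⟨h1, h2⟩
      show y w.length :: cword y w.length = b :: w
      rw [ih.1 h1]
      have h2' : y w.length = b := h2
      rw [h2']
    · intro h
      have h' : y w.length :: cword y w.length = b :: w := h
      rcases List.cons.injEq _ _ _ _ ▸ h' with ⟨hb, hw⟩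
      exact ⟨ih.2 hw, hb⟩

lemma cword_drop {y : Cantor} {m n : ℕ} (h : m ≤ n) :
    cword y m = (cword y n).drop (n - m) := by
  induction n with
  | zero => interval_cases m; simp [cword]
  | succ n ih =>
    rcases Nat.lt_succ_iff_lt_or_eq.1 (Nat.lt_succ_of_le h) with h' | rfl
    · have hm : m ≤ n := by omega
      rw [ih hm]
      show _ = (y n :: cword y n).drop (n + 1 - m)
      rw [show n + 1 - m = (n - m) + 1 by omega]
      rfl
    · simp

lemma cyl_nested {w u : List Bool} (hlen : u.length ≤ w.length)
    (hne : (cyl w ∩ cyl u).Nonempty) : cyl w ⊆ cyl u := by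
  obtain ⟨z, hzw, hzu⟩ := hne
  intro y hy
  have h1 : cword z w.length = w := mem_cyl_iff_cword.1 hzw
  have h2 : cword z u.length = u := mem_cyl_iff_cword.1 hzu
  have h3 : cword y w.length = w := mem_cyl_iff_cword.1 hy
  refine mem_cyl_iff_cword.2 ?_
  have e1 : cword y u.length = (cword y w.length).drop (w.length - u.length) := cword_drop hlen
  have e2 : cword z u.length = (cword z w.length).drop (w.length - u.length) := cword_drop hlen
  rw [h1] at e2
  rw [e1, h3, ← e2, h2]

/-- Uniform oscillation bound on deep cylinders. -/
lemma exists_osc (g : C(Cantor, ℝ)) {ε : ℝ} (hε : 0 < ε) :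
    ∃ n : ℕ, ∀ w ∈ levelF n, ∀ x y : Cantor, x ∈ cyl w → y ∈ cyl w → |g x - g y| ≤ ε := by
  have hcov : ∀ x : Cantor, ∃ n : ℕ, ∀ y ∈ cyl (cword x n), |g y - g x| < ε / 2 := by
    intro x
    have : IsOpen {y : Cantor | |g y - g x| < ε / 2} := by
      have : Continuous fun y => |g y - g x| := (g.continuous.sub continuous_const).abs
      exact isOpen_lt this continuous_const
    obtain ⟨n, hn⟩ := exists_cyl_subset this
      (by show |g x - g x| < ε / 2; rw [sub_self, abs_zero]; linarith)
    exact ⟨n, fun y hy => hn hy⟩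
  choose nx hnx using hcov
  obtain ⟨t, ht⟩ := isCompact_univ.elim_finite_subcover
    (fun x : Cantor => cyl (cword x (nx x)))
    (fun x => (isClopen_cyl _).isOpen)
    (fun y _ => Set.mem_iUnion.2 ⟨y, mem_cyl_cword y (nx y)⟩)
  refine ⟨(t.sup nx) + 1, fun w hw x y hx hy => ?_⟩
  obtain ⟨z, hzt, hz⟩ : ∃ z ∈ t, x ∈ cyl (cword z (nx z)) := by
    have := ht (Set.mem_univ x)
    simpa using this
  have hsub : cyl w ⊆ cyl (cword z (nx z)) := by
    refine cyl_nested ?_ ⟨x, hx, hz⟩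
    rw [cword_length, mem_levelF.1 hw]
    exact Nat.lt_succ_of_le (Finset.le_sup hzt) |>.le
  have b1 := hnx z x (hsub hx)
  have b2 := hnx z y (hsub hy)
  calc |g x - g y| ≤ |g x - g z| + |g z - g y| := abs_sub_le _ _ _
    _ = |g x - g z| + |g y - g z| := by rw [abs_sub_comm (g z)]
    _ ≤ ε / 2 + ε / 2 := add_le_add b1.le b2.le
    _ = ε := by ring

/-! ### Continuity of the compensated integrals -/

lemma cm_univ_toReal : (cm μ Set.univ).toReal = tfn μ [] := by
  rw [cm_univ, ENNReal.toReal_ofReal (tfn_nonneg [])]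

lemma integrable_g (g : C(Cantor, ℝ)) (ν : Measure Cantor) [IsFiniteMeasure ν] :
    Integrable (fun y => g y) ν := by
  have := (BoundedContinuousFunction.mkOfCompact g).integrable ν
  exact this

lemma key_approx (g : C(Cantor, ℝ)) {ε : ℝ} (hε : 0 < ε) {n : ℕ}
    (hosc : ∀ w ∈ levelF n, ∀ x y : Cantor, x ∈ cyl w → y ∈ cyl w → |g x - g y| ≤ ε)
    (μ : SignedMeasure Cantor) :
    |∫ y, g y ∂(cm μ) - ∑ w ∈ levelF n, g (pt w) * tfn μ w| ≤ ε * tfn μ [] := by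
  classical
  set ν := cm μ
  set h : Cantor → ℝ := fun y => ∑ w ∈ levelF n, (cyl w).indicator (fun _ => g (pt w)) y
    with hh
  have hint : ∀ w : List Bool, Integrable ((cyl w).indicator (fun _ => g (pt w))) ν :=
    fun w => (integrable_const _).indicator (measurableSet_cyl w)
  have hinth : Integrable h ν := integrable_finset_sum _ fun w _ => hint w
  have hIh : ∫ y, h y ∂ν = ∑ w ∈ levelF n, g (pt w) * tfn μ w := by
    rw [hh, integral_finset_sum _ fun w _ => hint w]
    refine Finset.sum_congr rfl fun w _ => ?_
    rw [integral_indicator_const _ (measurableSet_cyl w), measureReal_def, cm_cyl,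
      ENNReal.toReal_ofReal (tfn_nonneg w), smul_eq_mul, mul_comm]
  have hbound : ∀ y : Cantor, ‖g y - h y‖ ≤ ε := by
    intro y
    obtain ⟨w, hwmem, hyw⟩ : ∃ w ∈ levelF n, y ∈ cyl w := by
      have hy' : y ∈ ⋃ w ∈ levelF n, cyl w := by rw [iUnion_cyl_levelF n]; trivial
      simpa using hy'
    have hval : h y = g (pt w) := by
      have hrfl : h y = ∑ w' ∈ levelF n, (cyl w').indicator (fun _ => g (pt w')) y := rfl
      have h0 : ∀ w' ∈ levelF n, w' ≠ w → (cyl w').indicator (fun _ => g (pt w')) y = 0 := by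
        intro w' hw' hne
        refine Set.indicator_of_notMem (fun hyw' => ?_) _
        exact (disjoint_cyl w' w (by rw [mem_levelF.1 hw', mem_levelF.1 hwmem]) hne).ne_of_mem
          hyw' hyw rfl
      rw [hrfl, Finset.sum_eq_single_of_mem w hwmem h0, Set.indicator_of_mem hyw]
    rw [hval, Real.norm_eq_abs]
    exact hosc w hwmem y (pt w) hyw (pt_mem w)
  have := norm_integral_le_of_norm_le_const (μ := ν)
    (f := fun y => g y - h y) (C := ε) (Filter.Eventually.of_forall hbound)
  rw [integral_sub (integrable_g g ν) hinth] at this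
  rw [← hIh]
  calc |∫ y, g y ∂ν - ∫ y, h y ∂ν| ≤ ε * (ν Set.univ).toReal := this
    _ = ε * tfn μ [] := by rw [cm_univ_toReal]

lemma toSM_eq_zero {ν : Measure Cantor} [IsFiniteMeasure ν] (hν : ν = 0) :
    ν.toSignedMeasure = 0 := by
  subst hν
  exact Measure.toSignedMeasure_zero

/-! ### Main continuity -/

lemma continuous_integral_cm (g : C(Cantor, ℝ)) :
    Continuous fun μ : MK Cantor => ∫ y, g y ∂(cm μ.1) := by
  rw [continuous_iff_continuousAt]
  intro μ₀
  rw [ContinuousAt, Metric.tendsto_nhds]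
  intro ε hε
  set B : ℝ := tfn μ₀.1 [] + 1 with hB
  have hB0 : 0 < B := by have := tfn_nonneg (μ := μ₀.1) []; simp only [hB]; linarith
  set ε' : ℝ := ε / (4 * B) with hε'
  have hε'0 : 0 < ε' := by rw [hε']; positivity
  obtain ⟨n, hosc⟩ := exists_osc g hε'0
  set F : MK Cantor → ℝ := fun μ => ∑ w ∈ levelF n, g (pt w) * tfn μ.1 w with hF
  have hFcont : Continuous F :=
    continuous_finset_sum _ fun w _ => continuous_const.mul (continuous_tfn w)
  have ev1 : ∀ᶠ μ in nhds μ₀, |F μ - F μ₀| < ε / 4 := by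
    have h := Metric.tendsto_nhds.1 (hFcont.continuousAt (x := μ₀)) (ε / 4) (by linarith)
    refine h.mono fun μ hμ => ?_
    rwa [Real.dist_eq] at hμ
  have ev2 : ∀ᶠ μ in nhds μ₀, tfn μ.1 [] < B := by
    have h := Metric.tendsto_nhds.1 ((continuous_tfn []).continuousAt (x := μ₀)) 1 one_pos
    refine h.mono fun μ hμ => ?_
    rw [Real.dist_eq] at hμ
    have := abs_lt.1 hμ
    simp only [hB]
    linarith [this.2]
  filter_upwards [ev1, ev2] with μ h1 h2
  have k1 := key_approx g hε'0 hosc μ.1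
  have k2 := key_approx g hε'0 hosc μ₀.1
  have hm0 : 0 ≤ tfn μ.1 [] := tfn_nonneg []
  have hm0' : 0 ≤ tfn μ₀.1 [] := tfn_nonneg []
  have hεB : ε' * B = ε / 4 := by
    rw [hε']; field_simp
  have hb1 : ε' * tfn μ.1 [] ≤ ε / 4 := by
    rw [← hεB]
    exact mul_le_mul_of_nonneg_left h2.le hε'0.le
  have hb2 : ε' * tfn μ₀.1 [] ≤ ε / 4 := by
    rw [← hεB]
    refine mul_le_mul_of_nonneg_left ?_ hε'0.le
    simp only [hB]; linarith
  rw [Real.dist_eq]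
  have tri : |∫ y, g y ∂(cm μ.1) - ∫ y, g y ∂(cm μ₀.1)|
      ≤ |∫ y, g y ∂(cm μ.1) - F μ| + |F μ - F μ₀| + |F μ₀ - ∫ y, g y ∂(cm μ₀.1)| := by
    have := abs_sub_le (∫ y, g y ∂(cm μ.1)) (F μ) (∫ y, g y ∂(cm μ₀.1))
    have h4 := abs_sub_le (F μ) (F μ₀) (∫ y, g y ∂(cm μ₀.1))
    linarith
  have k2' : |F μ₀ - ∫ y, g y ∂(cm μ₀.1)| ≤ ε' * tfn μ₀.1 [] := by
    rw [abs_sub_comm]; exact k2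
  calc |∫ y, g y ∂(cm μ.1) - ∫ y, g y ∂(cm μ₀.1)|
      ≤ |∫ y, g y ∂(cm μ.1) - F μ| + |F μ - F μ₀| + |F μ₀ - ∫ y, g y ∂(cm μ₀.1)| := tri
    _ ≤ ε' * tfn μ.1 [] + ε / 4 + ε' * tfn μ₀.1 [] := by
        refine add_le_add (add_le_add k1 h1.le) k2'
    _ ≤ ε / 4 + ε / 4 + ε / 4 := by linarith
    _ < ε := by linarith

end Stmt10Aux

open Stmt10Aux in
theorem stmt10_aux : ∃ ξ : MK Cantor → MK Cantor, IsCompensationFunction ξ := by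
  classical
  refine ⟨fun μ => ⟨(cm μ.1).toSignedMeasure, by
    rw [totalVariation_toSM]; infer_instance⟩, ?_, ?_⟩
  · refine Continuous.subtype_mk ?_ _
    refine continuous_induced_rng.2 ?_
    refine continuous_pi fun g => ?_
    have heq : (fun μ : MK Cantor => sInt (cm μ.1).toSignedMeasure g)
        = fun μ : MK Cantor => ∫ y, g y ∂(cm μ.1) := by
      funext μ
      exact sInt_toSM _ _
    show Continuous fun μ : MK Cantor => sInt (cm μ.1).toSignedMeasure g
    rw [heq]
    exact continuous_integral_cm g
  · intro μ
    rw [IsCompensation]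
    split_ifs with h
    · refine ⟨?_, ?_, ?_⟩
      · refine VectorMeasure.le_iff.2 fun i hi => ?_
        rw [VectorMeasure.zero_apply, Measure.toSignedMeasure_apply_measurable hi]
        exact ENNReal.toReal_nonneg
      · refine VectorMeasure.le_iff.2 fun i hi => ?_
        rw [Measure.toSignedMeasure_apply_measurable hi,
          Measure.toSignedMeasure_apply_measurable hi]
        exact ENNReal.toReal_mono (measure_ne_top _ i) (Measure.le_iff'.1 (cm_le μ.2) i)
      · rw [Measure.toSignedMeasure_apply_measurable MeasurableSet.univ, measureReal_def, cm_univ,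
          ENNReal.toReal_ofReal (tfn_nonneg [])]
        show max (sfn μ.1 []) 0 = μ.1 Set.univ
        rw [apply_univ_eq_sfn] at h ⊢
        exact max_eq_left h.le
    · have htfn0 : tfn μ.1 [] = 0 := by
        show max (sfn μ.1 []) 0 = 0
        rw [apply_univ_eq_sfn] at h
        exact max_eq_right (not_lt.1 h)
      have hcm0 : cm μ.1 = 0 := by
        rw [cm, htfn0]
        simp
      exact toSM_eq_zero hcm0

/-- The Cantor set admits a compensation function. -/
theorem stmt10 : ∃ ξ : MK Cantor → MK Cantor, IsCompensationFunction ξ := by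
  exact stmt10_aux

end
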